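/- arXiv:1704.00796 — 5 statements merged into one kernel-verified Lean document; each statement's English description precedes it below -/
import Mathlib

section
/- Let F : ℝ → ℝ be C², let ξ, u : ℝ → ℝ be C¹, and define the characteristic flow x(s,t) = ξ(s) + F'(u(s))·t. Let t_s ∈ ℝ and let s₀, s*, s₁ : (t_s, ∞) → ℝ be C¹ functions such that for every t > t_s one has x(s₀(t),t) = x(s*(t),t) = x(s₁(t),t), u(s₀(t)) ≠ u(s₁(t)), and the signed area A_Dif(s₀(t), s*(t), s₁(t), t) = 0. Then for every t > t_s the common vertical line moves at the Rankine–Hugoniot speed: d/dt x(s₀(t),t) = (F(u(s₀(t))) − F(u(s₁(t)))) / (u(s₀(t)) − u(s₁(t))). -/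
open MeasureTheory Set

/-- The characteristic flow `x(s,t) = ξ(s) + F'(u(s))·t`. -/
noncomputable def charFlow (F ξ u : ℝ → ℝ) (s t : ℝ) : ℝ :=
  ξ s + deriv F (u s) * t

/-- The signed area
`A_Dif(s₀,s*,s₁,t) = ½∫_{s₀}^{s₁} (x(s,t)u'(s) − ∂_s x(s,t)·u(s)) ds
  + ½( x(s*,t)(u(s₀) − u(s₁)) + u(s*)(x(s₁,t) − x(s₀,t)) )`. -/
noncomputable def ADif (F ξ u : ℝ → ℝ) (s₀ sm s₁ t : ℝ) : ℝ :=
  (1 / 2) * (∫ s in s₀..s₁,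
      (charFlow F ξ u s t * deriv u s - deriv (fun r => charFlow F ξ u r t) s * u s))
  + (1 / 2) * (charFlow F ξ u sm t * (u s₀ - u s₁)
      + u sm * (charFlow F ξ u s₁ t - charFlow F ξ u s₀ t))

/-- If the three parameter curves track a common vertical line with zero signed area
for all `t > t_s`, then that vertical line moves at the Rankine–Hugoniot speed. -/
theorem equal_area_implies_rankine_hugoniot
    (F ξ u : ℝ → ℝ) (hF : ContDiff ℝ 2 F) (hξ : ContDiff ℝ 1 ξ) (hu : ContDiff ℝ 1 u)
    (ts : ℝ) (s₀ sm s₁ : ℝ → ℝ)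
    (hs₀ : ContDiffOn ℝ 1 s₀ (Ioi ts)) (hsm : ContDiffOn ℝ 1 sm (Ioi ts))
    (hs₁ : ContDiffOn ℝ 1 s₁ (Ioi ts))
    (hline : ∀ t ∈ Ioi ts, charFlow F ξ u (s₀ t) t = charFlow F ξ u (sm t) t ∧
      charFlow F ξ u (sm t) t = charFlow F ξ u (s₁ t) t)
    (hne : ∀ t ∈ Ioi ts, u (s₀ t) ≠ u (s₁ t))
    (hA : ∀ t ∈ Ioi ts, ADif F ξ u (s₀ t) (sm t) (s₁ t) t = 0) :
    ∀ t ∈ Ioi ts, HasDerivAt (fun τ => charFlow F ξ u (s₀ τ) τ)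
      ((F (u (s₀ t)) - F (u (s₁ t))) / (u (s₀ t) - u (s₁ t))) t := by
  -- regularity
  have hFd : Differentiable ℝ F := hF.differentiable two_ne_zero
  have hF' : ContDiff ℝ 1 (deriv F) :=
    ((contDiff_succ_iff_deriv (n := 1)).mp (by exact_mod_cast hF)).2.2
  set g : ℝ → ℝ := fun s => deriv F (u s) with hg_def
  have hgC : ContDiff ℝ 1 g := hF'.comp hu
  have hgd : Differentiable ℝ g := hgC.differentiable one_ne_zero
  have hg'c : Continuous (deriv g) := (contDiff_one_iff_deriv.mp hgC).2
  have hud : Differentiable ℝ u := hu.differentiable one_ne_zero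
  have hu'c : Continuous (deriv u) := (contDiff_one_iff_deriv.mp hu).2
  have hξd : Differentiable ℝ ξ := hξ.differentiable one_ne_zero
  have hξ'c : Continuous (deriv ξ) := (contDiff_one_iff_deriv.mp hξ).2
  -- antiderivative
  set Φ : ℝ → ℝ := fun r => ∫ s in (0:ℝ)..r, (ξ s * deriv u s - deriv ξ s * u s) with hΦ_def
  have hcont : Continuous fun s => ξ s * deriv u s - deriv ξ s * u s :=
    (hξ.continuous.mul hu'c).sub (hξ'c.mul hud.continuous)
  have hΦ : ∀ r, HasDerivAt Φ (ξ r * deriv u r - deriv ξ r * u r) r :=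
    fun r => (hcont.integral_hasStrictDerivAt 0 r).hasDerivAt
  -- s-derivative of the flow
  have hCs : ∀ τ s, HasDerivAt (fun w => charFlow F ξ u w τ) (deriv ξ s + deriv g s * τ) s := by
    intro τ s
    have := (hξd s).hasDerivAt.add ((hgd s).hasDerivAt.mul_const τ)
    simpa [charFlow, hg_def, Pi.add_def] using this
  have hCsd : ∀ τ s, deriv (fun w => charFlow F ξ u w τ) s = deriv ξ s + deriv g s * τ :=
    fun τ s => (hCs τ s).deriv
  -- the antiderivative of the full integrand
  set P : ℝ → ℝ → ℝ := fun w τ => Φ w + τ * (2 * F (u w) - g w * u w) with hP_def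
  have hPs : ∀ τ s, HasDerivAt (fun w => P w τ)
      (charFlow F ξ u s τ * deriv u s - deriv (fun w => charFlow F ξ u w τ) s * u s) s := by
    intro τ s
    have h1 : HasDerivAt (fun w => F (u w)) (deriv F (u s) * deriv u s) s :=
      (hFd (u s)).hasDerivAt.comp s (hud s).hasDerivAt
    have h2 : HasDerivAt (fun w => g w * u w) (deriv g s * u s + g s * deriv u s) s :=
      (hgd s).hasDerivAt.mul (hud s).hasDerivAt
    have h3 : HasDerivAt (fun w => P w τ) _ s := (hΦ s).add (((h1.const_mul (2:ℝ)).sub h2).const_mul τ)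
    convert h3 using 1
    rw [hCsd]
    simp only [charFlow, hg_def]
    ring
  have hint : ∀ (p r τ : ℝ), (∫ s in p..r,
      (charFlow F ξ u s τ * deriv u s - deriv (fun w => charFlow F ξ u w τ) s * u s))
      = P r τ - P p τ := by
    intro p r τ
    apply intervalIntegral.integral_eq_sub_of_hasDerivAt (fun s _ => hPs τ s)
    apply Continuous.intervalIntegrable
    have hrw : (fun s => charFlow F ξ u s τ * deriv u s
        - deriv (fun w => charFlow F ξ u w τ) s * u s)
        = fun s => (ξ s + g s * τ) * deriv u s - (deriv ξ s + deriv g s * τ) * u s := by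
      funext s; rw [hCsd]; simp [charFlow, hg_def]
    rw [hrw]
    exact ((hξ.continuous.add (hgC.continuous.mul continuous_const)).mul hu'c).sub
      ((hξ'c.add (hg'c.mul continuous_const)).mul hud.continuous)
  have hAeq : ∀ p q r τ, ADif F ξ u p q r τ =
      (1/2) * (P r τ - P p τ) + (1/2) * ((ξ q + g q * τ) * (u p - u r)
        + u q * ((ξ r + g r * τ) - (ξ p + g p * τ))) := by
    intro p q r τ
    rw [ADif, hint]
    simp [charFlow, hg_def]
  -- fix t
  intro t ht
  have hmem : Ioi ts ∈ nhds t := isOpen_Ioi.mem_nhds ht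
  have hda : HasDerivAt s₀ (deriv s₀ t) t :=
    ((hs₀.contDiffAt hmem).differentiableAt one_ne_zero).hasDerivAt
  have hdm : HasDerivAt sm (deriv sm t) t :=
    ((hsm.contDiffAt hmem).differentiableAt one_ne_zero).hasDerivAt
  have hdb : HasDerivAt s₁ (deriv s₁ t) t :=
    ((hs₁.contDiffAt hmem).differentiableAt one_ne_zero).hasDerivAt
  set a := s₀ t with ha_def
  set m := sm t with hm_def
  set b := s₁ t with hb_def
  set a' := deriv s₀ t with ha'_def
  set m' := deriv sm t with hm'_def
  set b' := deriv s₁ t with hb'_def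
  -- derivatives of the three position curves
  have hXof : ∀ (σ : ℝ → ℝ) (w : ℝ) (w' : ℝ), σ t = w → HasDerivAt σ w' t →
      HasDerivAt (fun τ => charFlow F ξ u (σ τ) τ)
        ((deriv ξ w + deriv g w * t) * w' + g w) t := by
    intro σ w w' hw hσ
    subst hw
    have h1 : HasDerivAt (fun τ => ξ (σ τ)) (deriv ξ (σ t) * w') t :=
      (hξd (σ t)).hasDerivAt.comp t hσ
    have h2 : HasDerivAt (fun τ => g (σ τ)) (deriv g (σ t) * w') t :=
      (hgd (σ t)).hasDerivAt.comp t hσ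
    have h3 : HasDerivAt (fun τ => g (σ τ) * τ) (deriv g (σ t) * w' * t + g (σ t) * 1) t := by
      simpa using (show HasDerivAt (fun τ => g (σ τ) * τ) _ t from h2.mul (hasDerivAt_id t))
    have heq : (fun τ => charFlow F ξ u (σ τ) τ) = fun τ => ξ (σ τ) + g (σ τ) * τ := by
      funext τ; simp [charFlow, hg_def]
    rw [heq]
    convert (show HasDerivAt (fun τ => ξ (σ τ) + g (σ τ) * τ) _ t from h1.add h3) using 1; ring
  have hXa := hXof s₀ a a' rfl hda
  have hXm := hXof sm m m' rfl hdm
  have hXb := hXof s₁ b b' rfl hdb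
  set Da := (deriv ξ a + deriv g a * t) * a' + g a with hDa_def
  set Dm := (deriv ξ m + deriv g m * t) * m' + g m with hDm_def
  set Db := (deriv ξ b + deriv g b * t) * b' + g b with hDb_def
  have hev1 : (fun τ => charFlow F ξ u (s₀ τ) τ) =ᶠ[nhds t] (fun τ => charFlow F ξ u (sm τ) τ) :=
    Filter.eventuallyEq_of_mem hmem (fun τ hτ => (hline τ hτ).1)
  have hev2 : (fun τ => charFlow F ξ u (s₁ τ) τ) =ᶠ[nhds t] (fun τ => charFlow F ξ u (sm τ) τ) :=
    Filter.eventuallyEq_of_mem hmem (fun τ hτ => ((hline τ hτ).2).symm)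
  have e1 : Dm = Da := (hXm.congr_of_eventuallyEq hev1).unique hXa
  have e2 : Db = Da := by
    have : Dm = Db := (hXm.congr_of_eventuallyEq hev2).unique hXb
    rw [← this, e1]
  -- line equalities at time t
  have eL1 : ξ a + g a * t = ξ m + g m * t := by
    have := (hline t ht).1; simpa [charFlow, hg_def] using this
  have eL2 : ξ m + g m * t = ξ b + g b * t := by
    have := (hline t ht).2; simpa [charFlow, hg_def] using this
  -- derivatives of u, g, F∘u along the curves
  have hUof : ∀ (σ : ℝ → ℝ) (w' : ℝ), HasDerivAt σ w' t →
      HasDerivAt (fun τ => u (σ τ)) (deriv u (σ t) * w') t :=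
    fun σ w' hσ => (hud (σ t)).hasDerivAt.comp t hσ
  have hUa := hUof s₀ a' hda
  have hUm := hUof sm m' hdm
  have hUb := hUof s₁ b' hdb
  -- derivative of τ ↦ P (σ τ) τ
  have hPof : ∀ (σ : ℝ → ℝ) (w' : ℝ), HasDerivAt σ w' t →
      HasDerivAt (fun τ => P (σ τ) τ)
        ((ξ (σ t) * deriv u (σ t) - deriv ξ (σ t) * u (σ t)) * w'
          + ((2 * F (u (σ t)) - g (σ t) * u (σ t))
            + t * (2 * (g (σ t) * (deriv u (σ t) * w'))
              - (deriv g (σ t) * w' * u (σ t) + g (σ t) * (deriv u (σ t) * w'))))) t := by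
    intro σ w' hσ
    have hΦσ : HasDerivAt (fun τ => Φ (σ τ))
        ((ξ (σ t) * deriv u (σ t) - deriv ξ (σ t) * u (σ t)) * w') t :=
      (hΦ (σ t)).comp t hσ
    have hFσ : HasDerivAt (fun τ => F (u (σ τ))) (g (σ t) * (deriv u (σ t) * w')) t :=
      (hFd (u (σ t))).hasDerivAt.comp t (hUof σ w' hσ)
    have hgσ : HasDerivAt (fun τ => g (σ τ)) (deriv g (σ t) * w') t :=
      (hgd (σ t)).hasDerivAt.comp t hσ
    have h5 : HasDerivAt (fun τ => 2 * F (u (σ τ)) - g (σ τ) * u (σ τ))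
        (2 * (g (σ t) * (deriv u (σ t) * w'))
          - (deriv g (σ t) * w' * u (σ t) + g (σ t) * (deriv u (σ t) * w'))) t :=
      (hFσ.const_mul (2:ℝ)).sub (hgσ.mul (hUof σ w' hσ))
    have h6 : HasDerivAt (fun τ => τ * (2 * F (u (σ τ)) - g (σ τ) * u (σ τ)))
        (1 * (2 * F (u (σ t)) - g (σ t) * u (σ t))
          + t * (2 * (g (σ t) * (deriv u (σ t) * w'))
            - (deriv g (σ t) * w' * u (σ t) + g (σ t) * (deriv u (σ t) * w')))) t := by
      simpa using (show HasDerivAt (fun τ => τ * (2 * F (u (σ τ)) - g (σ τ) * u (σ τ))) _ t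
        from (hasDerivAt_id t).mul h5)
    have : HasDerivAt (fun τ => P (σ τ) τ) _ t := hΦσ.add h6
    convert this using 1
    ring
  have hPa := hPof s₀ a' hda
  have hPb := hPof s₁ b' hdb
  -- boundary part derivative
  have hCma : HasDerivAt (fun τ => ξ (sm τ) + g (sm τ) * τ) Dm t := hXm
  have hCaa : HasDerivAt (fun τ => ξ (s₀ τ) + g (s₀ τ) * τ) Da t := hXa
  have hCba : HasDerivAt (fun τ => ξ (s₁ τ) + g (s₁ τ) * τ) Db t := hXb
  have hB := (hCma.mul (hUa.sub hUb)).add (hUm.mul (hCba.sub hCaa))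
  have hR := ((hPb.sub hPa).const_mul (1/2:ℝ)).add (hB.const_mul (1/2:ℝ))
  -- the A function and its vanishing derivative
  have hAfun : (fun τ => ADif F ξ u (s₀ τ) (sm τ) (s₁ τ) τ)
      = (fun τ => (1/2) * (P (s₁ τ) τ - P (s₀ τ) τ)
        + (1/2) * ((ξ (sm τ) + g (sm τ) * τ) * (u (s₀ τ) - u (s₁ τ))
          + u (sm τ) * ((ξ (s₁ τ) + g (s₁ τ) * τ) - (ξ (s₀ τ) + g (s₀ τ) * τ)))) :=
    funext fun τ => hAeq _ _ _ _
  have hA0 : HasDerivAt (fun τ => ADif F ξ u (s₀ τ) (sm τ) (s₁ τ) τ) 0 t :=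
    (hasDerivAt_const t 0).congr_of_eventuallyEq
      (Filter.eventuallyEq_of_mem hmem fun τ hτ => hA τ hτ)
  rw [hAfun] at hA0
  have eE : (1/2) * (((ξ b * deriv u b - deriv ξ b * u b) * b'
        + ((2 * F (u b) - g b * u b) + t * (2 * (g b * (deriv u b * b'))
          - (deriv g b * b' * u b + g b * (deriv u b * b')))))
      - ((ξ a * deriv u a - deriv ξ a * u a) * a'
        + ((2 * F (u a) - g a * u a) + t * (2 * (g a * (deriv u a * a'))
          - (deriv g a * a' * u a + g a * (deriv u a * a'))))))
      + (1/2) * (Dm * (u a - u b) + (ξ m + g m * t) * (deriv u a * a' - deriv u b * b')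
        + ((deriv u m * m') * ((ξ b + g b * t) - (ξ a + g a * t)) + u m * (Db - Da))) = 0 := by
    have hR' := hR.unique hA0
    simp only [Pi.sub_apply] at hR'
    linear_combination hR'
  have key : (F (u a) - F (u b)) / (u a - u b) = Da := by
    rw [div_eq_iff (sub_ne_zero.mpr (hne t ht))]
    simp only [hDa_def, hDm_def, hDb_def] at eE e1 e2 ⊢
    linear_combination (-1:ℝ)*eE + ((u a - u b)/2)*e1 + ((u m - u b)/2)*e2
      - ((deriv u a * a' + deriv u m * m')/2)*eL1 - ((deriv u b * b' + deriv u m * m')/2)*eL2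
  rw [key]
  exact hXa
end

section
/- Let F : ℝ → ℝ be C², let ξ, u : ℝ → ℝ be C¹, and define the characteristic flow x(s,t) = ξ(s) + F'(u(s))·t. Let t₀ ∈ ℝ and let s₀, s*, s₁ : [t₀, ∞) → ℝ be C¹ functions such that for every t ≥ t₀ one has x(s₀(t),t) = x(s*(t),t) = x(s₁(t),t), u(s₀(t)) ≠ u(s₁(t)), and the line moves at Rankine–Hugoniot speed: d/dt x(s₀(t),t) = (F(u(s₀(t))) − F(u(s₁(t)))) / (u(s₀(t)) − u(s₁(t))). If the signed area satisfies A_Dif(s₀(t₀), s*(t₀), s₁(t₀), t₀) = 0, then A_Dif(s₀(t), s*(t), s₁(t), t) = 0 for all t ≥ t₀. -/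
open MeasureTheory Set

/-- If the common vertical line moves at Rankine–Hugoniot speed for all `t ≥ t₀`
and the signed area vanishes initially, then it vanishes for all `t ≥ t₀`. -/
theorem rankine_hugoniot_implies_equal_area
    (F ξ u : ℝ → ℝ) (hF : ContDiff ℝ 2 F) (hξ : ContDiff ℝ 1 ξ) (hu : ContDiff ℝ 1 u)
    (t₀ : ℝ) (s₀ sm s₁ : ℝ → ℝ)
    (hs₀ : ContDiffOn ℝ 1 s₀ (Ici t₀)) (hsm : ContDiffOn ℝ 1 sm (Ici t₀))
    (hs₁ : ContDiffOn ℝ 1 s₁ (Ici t₀))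
    (hline : ∀ t ∈ Ici t₀, charFlow F ξ u (s₀ t) t = charFlow F ξ u (sm t) t ∧
      charFlow F ξ u (sm t) t = charFlow F ξ u (s₁ t) t)
    (hne : ∀ t ∈ Ici t₀, u (s₀ t) ≠ u (s₁ t))
    (hRH : ∀ t ∈ Ici t₀, HasDerivAt (fun τ => charFlow F ξ u (s₀ τ) τ)
      ((F (u (s₀ t)) - F (u (s₁ t))) / (u (s₀ t) - u (s₁ t))) t)
    (hA₀ : ADif F ξ u (s₀ t₀) (sm t₀) (s₁ t₀) t₀ = 0) :
    ∀ t ∈ Ici t₀, ADif F ξ u (s₀ t) (sm t) (s₁ t) t = 0 := by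
  -- basic smoothness facts
  have huD : Differentiable ℝ u := hu.differentiable one_ne_zero
  have huC : Continuous (deriv u) := hu.continuous_deriv le_rfl
  have hξD : Differentiable ℝ ξ := hξ.differentiable one_ne_zero
  have hξC : Continuous (deriv ξ) := hξ.continuous_deriv le_rfl
  have hFD : Differentiable ℝ F := hF.differentiable two_ne_zero
  have hF1 : ContDiff ℝ 1 (deriv F) := by
    have h2 : ContDiff ℝ (1 + 1) F := by
      norm_num
      exact hF
    exact (contDiff_succ_iff_deriv.mp h2).2.2
  have hF1D : Differentiable ℝ (deriv F) := hF1.differentiable one_ne_zero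
  have hF1C : Continuous (deriv F) := hF1.continuous
  have hF2C : Continuous (deriv (deriv F)) := hF1.continuous_deriv le_rfl
  -- auxiliary functions
  set P : ℝ → ℝ := fun s => ξ s * deriv u s - deriv ξ s * u s with hPdef
  set Q : ℝ → ℝ := fun s =>
    deriv F (u s) * deriv u s - deriv (deriv F) (u s) * deriv u s * u s with hQdef
  set W : ℝ → ℝ := fun s => 2 * F (u s) - deriv F (u s) * u s with hWdef
  have hPc : Continuous P := (hξ.continuous.mul huC).sub (hξC.mul hu.continuous)
  have hQc : Continuous Q := ((hF1C.comp hu.continuous).mul huC).sub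
    (((hF2C.comp hu.continuous).mul huC).mul hu.continuous)
  set V : ℝ → ℝ := fun s => ∫ r in (0:ℝ)..s, P r with hVdef
  -- derivative of the flow in s
  have hxs : ∀ t s : ℝ, HasDerivAt (fun r => charFlow F ξ u r t)
      (deriv ξ s + deriv (deriv F) (u s) * deriv u s * t) s := by
    intro t s
    have h1 : HasDerivAt ξ (deriv ξ s) s := (hξD s).hasDerivAt
    have h2 : HasDerivAt (fun r => deriv F (u r)) (deriv (deriv F) (u s) * deriv u s) s :=
      (hF1D (u s)).hasDerivAt.comp s (huD s).hasDerivAt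
    simpa [charFlow] using h1.fun_add (h2.mul_const t)
  have hWd : ∀ s : ℝ, HasDerivAt W (Q s) s := by
    intro s
    have hus : HasDerivAt u (deriv u s) s := (huD s).hasDerivAt
    have h1 : HasDerivAt (fun r => F (u r)) (deriv F (u s) * deriv u s) s :=
      (hFD (u s)).hasDerivAt.comp s hus
    have h2 : HasDerivAt (fun r => deriv F (u r)) (deriv (deriv F) (u s) * deriv u s) s :=
      (hF1D (u s)).hasDerivAt.comp s hus
    have h3 := (h1.const_mul (2:ℝ)).fun_sub (h2.fun_mul hus)
    refine h3.congr_deriv ?_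
    simp only [hQdef]; ring
  have hVd : ∀ s : ℝ, HasDerivAt V (P s) s := by
    intro s
    exact intervalIntegral.integral_hasDerivAt_right (hPc.intervalIntegrable 0 s)
      (hPc.stronglyMeasurable.stronglyMeasurableAtFilter) hPc.continuousAt
  -- rewrite the integral
  have key : ∀ a c t : ℝ, (∫ s in a..c,
      (charFlow F ξ u s t * deriv u s - deriv (fun r => charFlow F ξ u r t) s * u s))
      = (V c - V a) + t * (W c - W a) := by
    intro a c t
    have hint : ∀ s : ℝ, charFlow F ξ u s t * deriv u s
        - deriv (fun r => charFlow F ξ u r t) s * u s = P s + t * Q s := by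
      intro s
      rw [(hxs t s).deriv]
      simp only [charFlow, hPdef, hQdef]; ring
    rw [intervalIntegral.integral_congr (g := fun s => P s + t * Q s) (fun s _ => hint s)]
    rw [intervalIntegral.integral_add (g := fun s => t * Q s) (hPc.intervalIntegrable a c)
      ((continuous_const.mul hQc).intervalIntegrable a c)]
    have h1 : (∫ s in a..c, P s) = V c - V a := by
      rw [hVdef]
      rw [intervalIntegral.integral_interval_sub_left (hPc.intervalIntegrable 0 c)
        (hPc.intervalIntegrable 0 a)]
    have h2 : (∫ s in a..c, Q s) = W c - W a :=
      intervalIntegral.integral_eq_sub_of_hasDerivAt (fun s _ => hWd s)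
        (hQc.intervalIntegrable a c)
    rw [h1, intervalIntegral.integral_const_mul, h2]
  -- the area as a nice function of time
  set g : ℝ → ℝ := fun τ => (1/2) * ((V (s₁ τ) - V (s₀ τ)) + τ * (W (s₁ τ) - W (s₀ τ)))
    + (1/2) * (charFlow F ξ u (sm τ) τ * (u (s₀ τ) - u (s₁ τ))
        + u (sm τ) * (charFlow F ξ u (s₁ τ) τ - charFlow F ξ u (s₀ τ) τ)) with hgdef
  have hAg : ∀ τ : ℝ, ADif F ξ u (s₀ τ) (sm τ) (s₁ τ) τ = g τ := by
    intro τ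
    rw [ADif, key, hgdef]
  -- the derivative of g vanishes on [t₀, ∞)
  have hderiv : ∀ t ∈ Ici t₀, HasDerivWithinAt g 0 (Ici t₀) t := by
    intro t ht
    have hud : UniqueDiffWithinAt ℝ (Ici t₀) t := uniqueDiffOn_Ici t₀ t ht
    set a' := derivWithin s₀ (Ici t₀) t with ha'
    set b' := derivWithin sm (Ici t₀) t with hb'
    set c' := derivWithin s₁ (Ici t₀) t with hc'
    have ha : HasDerivWithinAt s₀ a' (Ici t₀) t :=
      (hs₀.differentiableOn one_ne_zero t ht).hasDerivWithinAt
    have hb : HasDerivWithinAt sm b' (Ici t₀) t :=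
      (hsm.differentiableOn one_ne_zero t ht).hasDerivWithinAt
    have hc : HasDerivWithinAt s₁ c' (Ici t₀) t :=
      (hs₁.differentiableOn one_ne_zero t ht).hasDerivWithinAt
    set σ := (F (u (s₀ t)) - F (u (s₁ t))) / (u (s₀ t) - u (s₁ t)) with hσdef
    have hXa : HasDerivWithinAt (fun τ => charFlow F ξ u (s₀ τ) τ) σ (Ici t₀) t :=
      (hRH t ht).hasDerivWithinAt
    have hXc : HasDerivWithinAt (fun τ => charFlow F ξ u (s₁ τ) τ) σ (Ici t₀) t :=
      hXa.congr (fun τ hτ => (((hline τ hτ).1).trans (hline τ hτ).2).symm)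
        ((((hline t ht).1).trans (hline t ht).2).symm)
    have hXb : HasDerivWithinAt (fun τ => charFlow F ξ u (sm τ) τ) σ (Ici t₀) t :=
      hXa.congr (fun τ hτ => ((hline τ hτ).1).symm) (((hline t ht).1).symm)
    -- chain rule for the flow along a moving point
    have chain : ∀ (f : ℝ → ℝ) (f' : ℝ), HasDerivWithinAt f f' (Ici t₀) t →
        HasDerivWithinAt (fun τ => charFlow F ξ u (f τ) τ)
          (deriv ξ (f t) * f' + (deriv (deriv F) (u (f t)) * (deriv u (f t) * f') * t
            + deriv F (u (f t)))) (Ici t₀) t := by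
      intro f f' hf
      have h1 : HasDerivWithinAt (fun τ => ξ (f τ)) (deriv ξ (f t) * f') (Ici t₀) t :=
        (hξD (f t)).hasDerivAt.comp_hasDerivWithinAt t hf
      have h2 : HasDerivWithinAt (fun τ => u (f τ)) (deriv u (f t) * f') (Ici t₀) t :=
        (huD (f t)).hasDerivAt.comp_hasDerivWithinAt t hf
      have h3 : HasDerivWithinAt (fun τ => deriv F (u (f τ)))
          (deriv (deriv F) (u (f t)) * (deriv u (f t) * f')) (Ici t₀) t :=
        (hF1D (u (f t))).hasDerivAt.comp_hasDerivWithinAt (h := fun τ => u (f τ)) t h2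
      have h4 : HasDerivWithinAt (fun τ => deriv F (u (f τ)) * τ)
          (deriv (deriv F) (u (f t)) * (deriv u (f t) * f') * t
            + deriv F (u (f t))) (Ici t₀) t := by
        simpa using h3.fun_mul (hasDerivWithinAt_id t (Ici t₀))
      simpa [charFlow] using h1.fun_add h4
    have hea : deriv ξ (s₀ t) * a' + (deriv (deriv F) (u (s₀ t)) * (deriv u (s₀ t) * a') * t
        + deriv F (u (s₀ t))) = σ :=
      ((chain s₀ a' ha).derivWithin hud).symm.trans (hXa.derivWithin hud)
    have hec : deriv ξ (s₁ t) * c' + (deriv (deriv F) (u (s₁ t)) * (deriv u (s₁ t) * c') * t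
        + deriv F (u (s₁ t))) = σ :=
      ((chain s₁ c' hc).derivWithin hud).symm.trans (hXc.derivWithin hud)
    -- derivatives of the remaining pieces
    have hUa : HasDerivWithinAt (fun τ => u (s₀ τ)) (deriv u (s₀ t) * a') (Ici t₀) t :=
      (huD (s₀ t)).hasDerivAt.comp_hasDerivWithinAt t ha
    have hUb : HasDerivWithinAt (fun τ => u (sm τ)) (deriv u (sm t) * b') (Ici t₀) t :=
      (huD (sm t)).hasDerivAt.comp_hasDerivWithinAt t hb
    have hUc : HasDerivWithinAt (fun τ => u (s₁ τ)) (deriv u (s₁ t) * c') (Ici t₀) t :=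
      (huD (s₁ t)).hasDerivAt.comp_hasDerivWithinAt t hc
    have hVa : HasDerivWithinAt (fun τ => V (s₀ τ)) (P (s₀ t) * a') (Ici t₀) t :=
      (hVd (s₀ t)).comp_hasDerivWithinAt t ha
    have hVc : HasDerivWithinAt (fun τ => V (s₁ τ)) (P (s₁ t) * c') (Ici t₀) t :=
      (hVd (s₁ t)).comp_hasDerivWithinAt t hc
    have hWa : HasDerivWithinAt (fun τ => W (s₀ τ)) (Q (s₀ t) * a') (Ici t₀) t :=
      (hWd (s₀ t)).comp_hasDerivWithinAt t ha
    have hWc : HasDerivWithinAt (fun τ => W (s₁ τ)) (Q (s₁ t) * c') (Ici t₀) t :=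
      (hWd (s₁ t)).comp_hasDerivWithinAt t hc
    have hid : HasDerivWithinAt (fun τ : ℝ => τ) 1 (Ici t₀) t :=
      hasDerivWithinAt_id t (Ici t₀)
    have h_main : HasDerivWithinAt g
        ((1/2) * ((P (s₁ t) * c' - P (s₀ t) * a')
          + (1 * (W (s₁ t) - W (s₀ t)) + t * (Q (s₁ t) * c' - Q (s₀ t) * a')))
        + (1/2) * ((σ * (u (s₀ t) - u (s₁ t))
            + charFlow F ξ u (sm t) t * (deriv u (s₀ t) * a' - deriv u (s₁ t) * c'))
          + ((deriv u (sm t) * b') * (charFlow F ξ u (s₁ t) t - charFlow F ξ u (s₀ t) t)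
            + u (sm t) * (σ - σ)))) (Ici t₀) t := by
      exact (((hVc.sub hVa).add (hid.mul (hWc.sub hWa))).const_mul (1/2)).add
        (((hXb.mul (hUa.sub hUc)).add (hUb.mul (hXc.sub hXa))).const_mul (1/2))
    have hl1 := (hline t ht).1
    have hl2 := (hline t ht).2
    have hσmul : σ * (u (s₀ t) - u (s₁ t)) = F (u (s₀ t)) - F (u (s₁ t)) :=
      div_mul_cancel₀ _ (sub_ne_zero.mpr (hne t ht))
    have hzero : ((1/2) * ((P (s₁ t) * c' - P (s₀ t) * a')
          + (1 * (W (s₁ t) - W (s₀ t)) + t * (Q (s₁ t) * c' - Q (s₀ t) * a')))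
        + (1/2) * ((σ * (u (s₀ t) - u (s₁ t))
            + charFlow F ξ u (sm t) t * (deriv u (s₀ t) * a' - deriv u (s₁ t) * c'))
          + ((deriv u (sm t) * b') * (charFlow F ξ u (s₁ t) t - charFlow F ξ u (s₀ t) t)
            + u (sm t) * (σ - σ)))) = 0 := by
      simp only [charFlow] at hl1 hl2 ⊢
      simp only [hPdef, hQdef, hWdef]
      linear_combination (1/2) * (u (s₀ t)) * hea - (1/2) * (u (s₁ t)) * hec
        - (1/2) * (deriv u (s₀ t) * a') * hl1
        - (1/2) * (deriv u (s₁ t) * c') * hl2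
        - (1/2) * (deriv u (sm t) * b') * hl1
        - (1/2) * (deriv u (sm t) * b') * hl2
        + hσmul
    rw [hzero] at h_main
    exact h_main
  -- conclude by constancy
  intro t ht
  have hcont : ContinuousOn g (Icc t₀ t) := fun x hx =>
    ((hderiv x hx.1).continuousWithinAt).mono Icc_subset_Ici_self
  have hconst := constant_of_has_deriv_right_zero hcont
    (fun x hx => (hderiv x hx.1).mono (Ici_subset_Ici.mpr hx.1))
  have hgt : g t = g t₀ := hconst t ⟨ht, le_rfl⟩
  rw [hAg t, hgt, ← hAg t₀, hA₀]
end

section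
/- Let F : ℝ → ℝ be C², let ξ, u : ℝ → ℝ be C¹, and define the characteristic flow x(s,t) = ξ(s) + F'(u(s))·t. Let s₀, s*, s₁ be C¹ functions of t on an open interval I with x(s₀(t),t) = x(s*(t),t) = x(s₁(t),t) for all t ∈ I. Then the signed area A_Dif(t) = A_Dif(s₀(t), s*(t), s₁(t), t) is differentiable on I and d/dt A_Dif(t) = (d/dt x(s₀(t),t))·(u(s₀(t)) − u(s₁(t))) − (F(u(s₀(t))) − F(u(s₁(t)))). -/
open MeasureTheory Set

-- auxiliary defs
noncomputable def Pfun (ξ u : ℝ → ℝ) (y : ℝ) : ℝ :=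
  ∫ r in (0:ℝ)..y, (ξ r * deriv u r - deriv ξ r * u r)

noncomputable def Qfun (F u : ℝ → ℝ) (s : ℝ) : ℝ :=
  2 * F (u s) - deriv F (u s) * u s

lemma contDiff_derivF {F : ℝ → ℝ} (hF : ContDiff ℝ 2 F) : ContDiff ℝ 1 (deriv F) := by
  have h : ContDiff ℝ ((1:ℕ∞)+1) F := by exact_mod_cast hF
  exact (contDiff_succ_iff_deriv.mp h).2.2

lemma charFlow_hasDerivAt_s {F ξ u : ℝ → ℝ} (hF : ContDiff ℝ 2 F) (hξ : ContDiff ℝ 1 ξ)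
    (hu : ContDiff ℝ 1 u) (t s : ℝ) :
    HasDerivAt (fun r => charFlow F ξ u r t)
      (deriv ξ s + deriv (deriv F) (u s) * deriv u s * t) s := by
  have hF' := contDiff_derivF hF
  have h1 : HasDerivAt ξ (deriv ξ s) s := (hξ.differentiable one_ne_zero s).hasDerivAt
  have h2 : HasDerivAt (fun r => deriv F (u r)) (deriv (deriv F) (u s) * deriv u s) s :=
    ((hF'.differentiable one_ne_zero (u s)).hasDerivAt).comp s ((hu.differentiable one_ne_zero s).hasDerivAt)
  exact h1.add (h2.mul_const t)

lemma Qfun_hasDerivAt {F u : ℝ → ℝ} (hF : ContDiff ℝ 2 F) (hu : ContDiff ℝ 1 u) (s : ℝ) :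
    HasDerivAt (Qfun F u)
      (deriv F (u s) * deriv u s - deriv (deriv F) (u s) * deriv u s * u s) s := by
  have hF' := contDiff_derivF hF
  have hu' : HasDerivAt u (deriv u s) s := (hu.differentiable one_ne_zero s).hasDerivAt
  have h1 : HasDerivAt (fun r => F (u r)) (deriv F (u s) * deriv u s) s :=
    ((hF.differentiable two_ne_zero (u s)).hasDerivAt).comp s hu'
  have h2 : HasDerivAt (fun r => deriv F (u r)) (deriv (deriv F) (u s) * deriv u s) s :=
    ((hF'.differentiable one_ne_zero (u s)).hasDerivAt).comp s hu'
  have h3 := (h1.const_mul 2).sub (h2.mul hu')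
  have : HasDerivAt (Qfun F u)
      (2 * (deriv F (u s) * deriv u s) - (deriv (deriv F) (u s) * deriv u s * u s
        + deriv F (u s) * deriv u s)) s := h3
  convert this using 1
  ring

lemma Pfun_hasDerivAt {ξ u : ℝ → ℝ} (hξ : ContDiff ℝ 1 ξ) (hu : ContDiff ℝ 1 u) (y : ℝ) :
    HasDerivAt (Pfun ξ u) (ξ y * deriv u y - deriv ξ y * u y) y := by
  have hc : Continuous (fun r => ξ r * deriv u r - deriv ξ r * u r) :=
    (hξ.continuous.mul (hu.continuous_deriv le_rfl)).sub
      ((hξ.continuous_deriv le_rfl).mul hu.continuous)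
  exact intervalIntegral.integral_hasDerivAt_right (hc.intervalIntegrable _ _)
    (hc.stronglyMeasurableAtFilter _ _) hc.continuousAt

lemma integral_eq {F ξ u : ℝ → ℝ} (hF : ContDiff ℝ 2 F) (hξ : ContDiff ℝ 1 ξ)
    (hu : ContDiff ℝ 1 u) (c d t : ℝ) :
    (∫ s in c..d,
        (charFlow F ξ u s t * deriv u s - deriv (fun r => charFlow F ξ u r t) s * u s))
      = (Pfun ξ u d - Pfun ξ u c) + t * (Qfun F u d - Qfun F u c) := by
  have hF' := contDiff_derivF hF
  have cu := hu.continuous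
  have cu' := hu.continuous_deriv le_rfl
  have cξ := hξ.continuous
  have cξ' := hξ.continuous_deriv le_rfl
  have cF' := hF'.continuous
  have cF'' := hF'.continuous_deriv le_rfl
  have hc1 : Continuous (fun s => ξ s * deriv u s - deriv ξ s * u s) :=
    (cξ.mul cu').sub (cξ'.mul cu)
  have hc2 : Continuous (fun s =>
      deriv F (u s) * deriv u s - deriv (deriv F) (u s) * deriv u s * u s) :=
    ((cF'.comp cu).mul cu').sub (((cF''.comp cu).mul cu').mul cu)
  have h1 : ∀ s, charFlow F ξ u s t * deriv u s - deriv (fun r => charFlow F ξ u r t) s * u s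
      = (ξ s * deriv u s - deriv ξ s * u s)
        + t * (deriv F (u s) * deriv u s - deriv (deriv F) (u s) * deriv u s * u s) := by
    intro s
    rw [(charFlow_hasDerivAt_s hF hξ hu t s).deriv]
    simp only [charFlow, Qfun]
    ring
  rw [intervalIntegral.integral_congr (g := fun s =>
      (ξ s * deriv u s - deriv ξ s * u s)
        + t * (deriv F (u s) * deriv u s - deriv (deriv F) (u s) * deriv u s * u s))
      (fun s _ => h1 s)]
  rw [intervalIntegral.integral_add (hc1.intervalIntegrable _ _)
      ((hc2.intervalIntegrable _ _).const_mul t)]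
  rw [intervalIntegral.integral_const_mul]
  congr 1
  · rw [Pfun, Pfun]
    exact (intervalIntegral.integral_interval_sub_left (hc1.intervalIntegrable _ _)
      (hc1.intervalIntegrable _ _)).symm
  · congr 1
    exact intervalIntegral.integral_eq_sub_of_hasDerivAt
      (fun s _ => Qfun_hasDerivAt hF hu s) (hc2.intervalIntegrable _ _)

lemma ADif_eq {F ξ u : ℝ → ℝ} (hF : ContDiff ℝ 2 F) (hξ : ContDiff ℝ 1 ξ)
    (hu : ContDiff ℝ 1 u) (c m d t : ℝ) :
    ADif F ξ u c m d t
      = (1/2) * (Pfun ξ u d - Pfun ξ u c) + t/2 * (Qfun F u d - Qfun F u c)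
        + (1/2) * (charFlow F ξ u m t * (u c - u d)
            + u m * (charFlow F ξ u d t - charFlow F ξ u c t)) := by
  rw [ADif, integral_eq hF hξ hu]
  ring

/-- Differentiability of the signed area along the flow, with the derivative
`d/dt A_Dif(t) = (d/dt x(s₀(t),t))·(u(s₀(t)) − u(s₁(t))) − (F(u(s₀(t))) − F(u(s₁(t))))`. -/
theorem ADif_hasDerivAt
    (F ξ u : ℝ → ℝ) (hF : ContDiff ℝ 2 F) (hξ : ContDiff ℝ 1 ξ) (hu : ContDiff ℝ 1 u)
    (a b : ℝ) (s₀ sm s₁ : ℝ → ℝ)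
    (hs₀ : ContDiffOn ℝ 1 s₀ (Ioo a b)) (hsm : ContDiffOn ℝ 1 sm (Ioo a b))
    (hs₁ : ContDiffOn ℝ 1 s₁ (Ioo a b))
    (hline : ∀ t ∈ Ioo a b, charFlow F ξ u (s₀ t) t = charFlow F ξ u (sm t) t ∧
      charFlow F ξ u (sm t) t = charFlow F ξ u (s₁ t) t) :
    ∀ t ∈ Ioo a b, HasDerivAt (fun τ => ADif F ξ u (s₀ τ) (sm τ) (s₁ τ) τ)
      ((deriv (fun τ => charFlow F ξ u (s₀ τ) τ) t) * (u (s₀ t) - u (s₁ t))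
        - (F (u (s₀ t)) - F (u (s₁ t)))) t := by
  intro t ht
  have hF' := contDiff_derivF hF
  have hIoo : Ioo a b ∈ nhds t := Ioo_mem_nhds ht.1 ht.2
  -- derivatives of the parameter curves
  have hd₀ : HasDerivAt s₀ (deriv s₀ t) t :=
    (((hs₀.differentiableOn one_ne_zero).differentiableAt hIoo)).hasDerivAt
  have hdm : HasDerivAt sm (deriv sm t) t :=
    (((hsm.differentiableOn one_ne_zero).differentiableAt hIoo)).hasDerivAt
  have hd₁ : HasDerivAt s₁ (deriv s₁ t) t :=
    (((hs₁.differentiableOn one_ne_zero).differentiableAt hIoo)).hasDerivAt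
  -- derivatives of u ∘ sᵢ
  have hu₀ : HasDerivAt (fun τ => u (s₀ τ)) (deriv u (s₀ t) * deriv s₀ t) t :=
    ((hu.differentiable one_ne_zero (s₀ t)).hasDerivAt).comp t hd₀
  have hum : HasDerivAt (fun τ => u (sm τ)) (deriv u (sm t) * deriv sm t) t :=
    ((hu.differentiable one_ne_zero (sm t)).hasDerivAt).comp t hdm
  have hu₁ : HasDerivAt (fun τ => u (s₁ τ)) (deriv u (s₁ t) * deriv s₁ t) t :=
    ((hu.differentiable one_ne_zero (s₁ t)).hasDerivAt).comp t hd₁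
  -- derivatives of τ ↦ charFlow(sᵢ τ, τ)
  have hX : ∀ (s : ℝ → ℝ), HasDerivAt s (deriv s t) t →
      HasDerivAt (fun τ => charFlow F ξ u (s τ) τ)
        ((deriv ξ (s t) + deriv (deriv F) (u (s t)) * deriv u (s t) * t) * deriv s t
          + deriv F (u (s t))) t := by
    intro s hds
    have hA : HasDerivAt (fun τ => ξ (s τ)) (deriv ξ (s t) * deriv s t) t :=
      ((hξ.differentiable one_ne_zero (s t)).hasDerivAt).comp t hds
    have hus : HasDerivAt (fun τ => u (s τ)) (deriv u (s t) * deriv s t) t :=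
      ((hu.differentiable one_ne_zero (s t)).hasDerivAt).comp t hds
    have hB : HasDerivAt (fun τ => deriv F (u (s τ)))
        (deriv (deriv F) (u (s t)) * (deriv u (s t) * deriv s t)) t :=
      by have hB0 := (hF'.differentiable one_ne_zero (u (s t))).hasDerivAt; exact hB0.comp t hus
    have hC := hA.add (hB.mul (hasDerivAt_id t))
    have : HasDerivAt (fun τ => charFlow F ξ u (s τ) τ)
        (deriv ξ (s t) * deriv s t
          + (deriv (deriv F) (u (s t)) * (deriv u (s t) * deriv s t) * t
              + deriv F (u (s t)) * 1)) t := hC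
    convert this using 1
    ring
  have hX₀ := hX s₀ hd₀
  have hXm := hX sm hdm
  have hX₁ := hX s₁ hd₁
  set D₀ : ℝ := (deriv ξ (s₀ t) + deriv (deriv F) (u (s₀ t)) * deriv u (s₀ t) * t) * deriv s₀ t
      + deriv F (u (s₀ t)) with hD₀def
  -- the three flow curves agree near t, hence their derivatives agree
  have hEqm : (fun τ => charFlow F ξ u (s₀ τ) τ) =ᶠ[nhds t]
      (fun τ => charFlow F ξ u (sm τ) τ) := by
    filter_upwards [hIoo] with τ hτ using (hline τ hτ).1
  have hEq1 : (fun τ => charFlow F ξ u (s₀ τ) τ) =ᶠ[nhds t]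
      (fun τ => charFlow F ξ u (s₁ τ) τ) := by
    filter_upwards [hIoo] with τ hτ using ((hline τ hτ).1.trans (hline τ hτ).2)
  have hXm' : HasDerivAt (fun τ => charFlow F ξ u (sm τ) τ) D₀ t :=
    hX₀.congr_of_eventuallyEq hEqm.symm
  have hX₁' : HasDerivAt (fun τ => charFlow F ξ u (s₁ τ) τ) D₀ t :=
    hX₀.congr_of_eventuallyEq hEq1.symm
  have eDm : (deriv ξ (sm t) + deriv (deriv F) (u (sm t)) * deriv u (sm t) * t) * deriv sm t
      + deriv F (u (sm t)) = D₀ := hXm.unique hXm'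
  have eD1 : (deriv ξ (s₁ t) + deriv (deriv F) (u (s₁ t)) * deriv u (s₁ t) * t) * deriv s₁ t
      + deriv F (u (s₁ t)) = D₀ := hX₁.unique hX₁'
  have e1 : ξ (s₀ t) + deriv F (u (s₀ t)) * t = ξ (sm t) + deriv F (u (sm t)) * t :=
    (hline t ht).1
  have e2 : ξ (sm t) + deriv F (u (sm t)) * t = ξ (s₁ t) + deriv F (u (s₁ t)) * t :=
    (hline t ht).2
  -- the derivative of the s₀-flow appearing in the statement equals D₀
  have hDeq : deriv (fun τ => charFlow F ξ u (s₀ τ) τ) t = D₀ := hX₀.deriv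
  rw [hDeq]
  -- rewrite ADif using the explicit antiderivative form
  have hfun : (fun τ => ADif F ξ u (s₀ τ) (sm τ) (s₁ τ) τ)
      = fun τ => (1/2) * (Pfun ξ u (s₁ τ) - Pfun ξ u (s₀ τ))
          + τ/2 * (Qfun F u (s₁ τ) - Qfun F u (s₀ τ))
          + (1/2) * (charFlow F ξ u (sm τ) τ * (u (s₀ τ) - u (s₁ τ))
              + u (sm τ) * (charFlow F ξ u (s₁ τ) τ - charFlow F ξ u (s₀ τ) τ)) :=
    funext fun τ => ADif_eq hF hξ hu _ _ _ _
  rw [hfun]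
  -- build the derivative of the explicit expression
  have hP₀ : HasDerivAt (fun τ => Pfun ξ u (s₀ τ))
      ((ξ (s₀ t) * deriv u (s₀ t) - deriv ξ (s₀ t) * u (s₀ t)) * deriv s₀ t) t :=
    (Pfun_hasDerivAt hξ hu (s₀ t)).comp t hd₀
  have hP₁ : HasDerivAt (fun τ => Pfun ξ u (s₁ τ))
      ((ξ (s₁ t) * deriv u (s₁ t) - deriv ξ (s₁ t) * u (s₁ t)) * deriv s₁ t) t :=
    (Pfun_hasDerivAt hξ hu (s₁ t)).comp t hd₁
  have hQ₀ : HasDerivAt (fun τ => Qfun F u (s₀ τ))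
      ((deriv F (u (s₀ t)) * deriv u (s₀ t)
        - deriv (deriv F) (u (s₀ t)) * deriv u (s₀ t) * u (s₀ t)) * deriv s₀ t) t :=
    (Qfun_hasDerivAt hF hu (s₀ t)).comp t hd₀
  have hQ₁ : HasDerivAt (fun τ => Qfun F u (s₁ τ))
      ((deriv F (u (s₁ t)) * deriv u (s₁ t)
        - deriv (deriv F) (u (s₁ t)) * deriv u (s₁ t) * u (s₁ t)) * deriv s₁ t) t :=
    (Qfun_hasDerivAt hF hu (s₁ t)).comp t hd₁
  have hτ2 : HasDerivAt (fun τ : ℝ => τ/2) (1/2 : ℝ) t := by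
    simpa using (hasDerivAt_id t).div_const 2
  have comb := (((hP₁.sub hP₀).const_mul (1/2 : ℝ)).add (hτ2.mul (hQ₁.sub hQ₀))).add
    (((hXm.mul (hu₀.sub hu₁)).add (hum.mul (hX₁.sub hX₀))).const_mul (1/2 : ℝ))
  convert comb using 1
  · rfl
  · rfl
  · rfl
  simp only [charFlow, Qfun, Pi.sub_apply]
  linear_combination
    (1/2 * (deriv u (s₀ t) * deriv s₀ t) + 1/2 * (deriv u (sm t) * deriv sm t)) * e1
    + (1/2 * (deriv u (s₁ t) * deriv s₁ t) + 1/2 * (deriv u (sm t) * deriv sm t)) * e2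
    + (1/2 * (u (s₁ t)) - 1/2 * (u (s₀ t))) * eDm
    + (1/2 * (u (s₁ t)) - 1/2 * (u (sm t))) * eD1
end

section
/- (Generalized equal area principle, derivative identity.) Let F : ℝ → ℝ be C², let u : ℝ → ℝ be C¹, and define x(s,t) = s + F'(u(s))·t. Let s₀, s₁ be C¹ functions of t on an open interval I with x(s₀(t),t) = x(s₁(t),t) for all t ∈ I, and define the parametric area A(t) = ∫_{s₀(t)}^{s₁(t)} u(s)·∂_s x(s,t) ds. Then A is differentiable on I and A'(t) = (d/dt x(s₀(t),t))·(u(s₁(t)) − u(s₀(t))) + F(u(s₀(t))) − F(u(s₁(t))). -/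
open MeasureTheory Set

/-- The characteristic flow `x(s,t) = s + F'(u(s))·t`. -/
noncomputable def flowX (F u : ℝ → ℝ) (s t : ℝ) : ℝ :=
  s + deriv F (u s) * t

/-- The parametric area `A = ∫_{s₀}^{s₁} u(s)·∂_s x(s,t) ds`. -/
noncomputable def parArea (F u : ℝ → ℝ) (s₀ s₁ t : ℝ) : ℝ :=
  ∫ s in s₀..s₁, u s * deriv (fun r => flowX F u r t) s

/-- **Generalized equal area principle, derivative identity.**
`A'(t) = (d/dt x(s₀(t),t))·(u(s₁(t)) − u(s₀(t))) + F(u(s₀(t))) − F(u(s₁(t)))`. -/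
theorem parArea_hasDerivAt
    (F u : ℝ → ℝ) (hF : ContDiff ℝ 2 F) (hu : ContDiff ℝ 1 u)
    (a b : ℝ) (s₀ s₁ : ℝ → ℝ)
    (hs₀ : ContDiffOn ℝ 1 s₀ (Ioo a b)) (hs₁ : ContDiffOn ℝ 1 s₁ (Ioo a b))
    (hline : ∀ t ∈ Ioo a b, flowX F u (s₀ t) t = flowX F u (s₁ t) t) :
    ∀ t ∈ Ioo a b, HasDerivAt (fun τ => parArea F u (s₀ τ) (s₁ τ) τ)
      ((deriv (fun τ => flowX F u (s₀ τ) τ) t) * (u (s₁ t) - u (s₀ t))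
        + F (u (s₀ t)) - F (u (s₁ t))) t := by
  intro t ht
  -- regularity facts
  have hFd : ContDiff ℝ 1 (deriv F) := by
    have h : ContDiff ℝ ((1:ℕ∞)+1) F := by norm_num at hF ⊢; exact hF
    exact_mod_cast (contDiff_succ_iff_deriv.mp h).2.2
  have huD : ∀ s, HasDerivAt u (deriv u s) s := fun s =>
    (hu.differentiable one_ne_zero s).hasDerivAt
  have hF1 : ∀ v, HasDerivAt F (deriv F v) v := fun v =>
    (hF.differentiable (by norm_num) v).hasDerivAt
  have hF2 : ∀ v, HasDerivAt (deriv F) (deriv (deriv F) v) v := fun v =>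
    (hFd.differentiable one_ne_zero v).hasDerivAt
  have hcu : Continuous u := hu.continuous
  have hcu' : Continuous (deriv u) := hu.continuous_deriv le_rfl
  have hcF'' : Continuous (deriv (deriv F)) := hFd.continuous_deriv le_rfl
  -- derivative in s of flowX
  have hx : ∀ τ s, HasDerivAt (fun r => flowX F u r τ)
      (1 + deriv (deriv F) (u s) * deriv u s * τ) s := by
    intro τ s
    have h1 : HasDerivAt (fun r => deriv F (u r)) (deriv (deriv F) (u s) * deriv u s) s :=
      (hF2 (u s)).comp s (huD s)
    simpa [flowX] using (hasDerivAt_id s).fun_add (h1.mul_const τ)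
  have hxderiv : ∀ τ s, deriv (fun r => flowX F u r τ) s
      = 1 + deriv (deriv F) (u s) * deriv u s * τ := fun τ s => (hx τ s).deriv
  -- the function g with g(u)' providing an antiderivative of the t-part
  set g : ℝ → ℝ := fun v => v * deriv F v - F v with hg
  have hgD : ∀ v, HasDerivAt g (v * deriv (deriv F) v) v := by
    intro v
    have h := ((hasDerivAt_id v).fun_mul (hF2 v)).fun_sub (hF1 v)
    refine h.congr_deriv (Eq.symm ?_)
    simp only [id_eq]
    ring
  set Φ : ℝ → ℝ → ℝ := fun τ s => (∫ r in (0:ℝ)..s, u r) + τ * g (u s) with hΦ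
  have hint : ∀ s, HasDerivAt (fun x => ∫ r in (0:ℝ)..x, u r) (u s) s := fun s =>
    intervalIntegral.integral_hasDerivAt_right (hcu.intervalIntegrable _ _)
      (hcu.stronglyMeasurableAtFilter _ _) hcu.continuousAt
  have hΦD : ∀ τ s, HasDerivAt (Φ τ)
      (u s * deriv (fun r => flowX F u r τ) s) s := by
    intro τ s
    have h1 : HasDerivAt (fun x => g (u x)) (u s * deriv (deriv F) (u s) * deriv u s) s := by
      have h := (hgD (u s)).comp s (huD s)
      simpa [mul_assoc, Function.comp_def] using h
    have h2 := (hint s).fun_add (h1.const_mul τ)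
    refine h2.congr_deriv (Eq.symm ?_)
    rw [hxderiv]; ring
  -- continuity of the integrand
  have hcont : ∀ τ, Continuous (fun s => u s * deriv (fun r => flowX F u r τ) s) := by
    intro τ
    have hrw : (fun s => u s * deriv (fun r => flowX F u r τ) s)
        = fun s => u s * (1 + deriv (deriv F) (u s) * deriv u s * τ) := by
      funext s; rw [hxderiv]
    rw [hrw]
    exact hcu.mul (continuous_const.add (((hcF''.comp hcu).mul hcu').mul continuous_const))
  -- parArea as a difference of Φ
  have hA : ∀ τ, parArea F u (s₀ τ) (s₁ τ) τ = Φ τ (s₁ τ) - Φ τ (s₀ τ) := by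
    intro τ
    exact intervalIntegral.integral_eq_sub_of_hasDerivAt
      (fun x _ => hΦD τ x) ((hcont τ).intervalIntegrable _ _)
  -- derivatives of s₀, s₁ at t
  have hIoo : Ioo a b ∈ nhds t := Ioo_mem_nhds ht.1 ht.2
  have h₀ : HasDerivAt s₀ (deriv s₀ t) t :=
    ((hs₀.differentiableOn one_ne_zero).differentiableAt hIoo).hasDerivAt
  have h₁ : HasDerivAt s₁ (deriv s₁ t) t :=
    ((hs₁.differentiableOn one_ne_zero).differentiableAt hIoo).hasDerivAt
  have hu₀ : HasDerivAt (fun τ => u (s₀ τ)) (deriv u (s₀ t) * deriv s₀ t) t :=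
    (huD _).comp t h₀
  have hu₁ : HasDerivAt (fun τ => u (s₁ τ)) (deriv u (s₁ t) * deriv s₁ t) t :=
    (huD _).comp t h₁
  -- derivatives of the characteristic lines
  have hX₀ : HasDerivAt (fun τ => flowX F u (s₀ τ) τ)
      (deriv s₀ t + (deriv (deriv F) (u (s₀ t)) * (deriv u (s₀ t) * deriv s₀ t) * t
        + deriv F (u (s₀ t)))) t := by
    have h1 : HasDerivAt (fun τ => deriv F (u (s₀ τ)))
        (deriv (deriv F) (u (s₀ t)) * (deriv u (s₀ t) * deriv s₀ t)) t := (hF2 _).comp t hu₀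
    have h2 := h₀.fun_add (h1.fun_mul (hasDerivAt_id t))
    simpa [flowX] using h2
  have hX₁ : HasDerivAt (fun τ => flowX F u (s₁ τ) τ)
      (deriv s₁ t + (deriv (deriv F) (u (s₁ t)) * (deriv u (s₁ t) * deriv s₁ t) * t
        + deriv F (u (s₁ t)))) t := by
    have h1 : HasDerivAt (fun τ => deriv F (u (s₁ τ)))
        (deriv (deriv F) (u (s₁ t)) * (deriv u (s₁ t) * deriv s₁ t)) t := (hF2 _).comp t hu₁
    have h2 := h₁.fun_add (h1.fun_mul (hasDerivAt_id t))
    simpa [flowX] using h2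
  -- the two line derivatives agree
  have heq : deriv (fun τ => flowX F u (s₀ τ) τ) t = deriv (fun τ => flowX F u (s₁ τ) τ) t := by
    apply Filter.EventuallyEq.deriv_eq
    filter_upwards [hIoo] with τ hτ using hline τ hτ
  have hc : deriv s₀ t + (deriv (deriv F) (u (s₀ t)) * (deriv u (s₀ t) * deriv s₀ t) * t
        + deriv F (u (s₀ t)))
      = deriv s₁ t + (deriv (deriv F) (u (s₁ t)) * (deriv u (s₁ t) * deriv s₁ t) * t
        + deriv F (u (s₁ t))) := by
    rw [← hX₀.deriv, ← hX₁.deriv]; exact heq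
  -- derivative of τ ↦ Φ τ (sᵢ τ)
  have hB₀ : HasDerivAt (fun τ => Φ τ (s₀ τ))
      (u (s₀ t) * deriv s₀ t + (1 * g (u (s₀ t))
        + t * (u (s₀ t) * deriv (deriv F) (u (s₀ t)) * (deriv u (s₀ t) * deriv s₀ t)))) t := by
    have hg0 : HasDerivAt (fun τ => g (u (s₀ τ)))
        (u (s₀ t) * deriv (deriv F) (u (s₀ t)) * (deriv u (s₀ t) * deriv s₀ t)) t :=
      (hgD _).comp t hu₀
    exact (((hint (s₀ t)).comp t h₀)).fun_add ((hasDerivAt_id t).fun_mul hg0)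
  have hB₁ : HasDerivAt (fun τ => Φ τ (s₁ τ))
      (u (s₁ t) * deriv s₁ t + (1 * g (u (s₁ t))
        + t * (u (s₁ t) * deriv (deriv F) (u (s₁ t)) * (deriv u (s₁ t) * deriv s₁ t)))) t := by
    have hg1 : HasDerivAt (fun τ => g (u (s₁ τ)))
        (u (s₁ t) * deriv (deriv F) (u (s₁ t)) * (deriv u (s₁ t) * deriv s₁ t)) t :=
      (hgD _).comp t hu₁
    exact (((hint (s₁ t)).comp t h₁)).fun_add ((hasDerivAt_id t).fun_mul hg1)
  have hrwA : (fun τ => parArea F u (s₀ τ) (s₁ τ) τ)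
      = fun τ => Φ τ (s₁ τ) - Φ τ (s₀ τ) := funext hA
  rw [hrwA, hX₀.deriv]
  refine (hB₁.fun_sub hB₀).congr_deriv (Eq.symm ?_)
  simp only [hg]
  linear_combination u (s₁ t) * hc
end

section
/- (Generalized equal area principle.) Let F : ℝ → ℝ be C², let u : ℝ → ℝ be C¹, and define x(s,t) = s + F'(u(s))·t. Let s₀, s₁ be C¹ functions of t on an open interval I with x(s₀(t),t) = x(s₁(t),t) and u(s₀(t)) ≠ u(s₁(t)) for all t ∈ I, and define A(t) = ∫_{s₀(t)}^{s₁(t)} u(s)·∂_s x(s,t) ds. Then for each t ∈ I, A'(t) = 0 if and only if d/dt x(s₀(t),t) = (F(u(s₀(t))) − F(u(s₁(t)))) / (u(s₀(t)) − u(s₁(t))). In particular, the vertical line of zero signed parametric area through the multivalued region moves at the speed given by the Rankine–Hugoniot condition. -/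
open MeasureTheory Set

/-- **Generalized equal area principle.** The parametric area is stationary
exactly when the common vertical line moves at the Rankine–Hugoniot speed. -/
theorem generalized_equal_area_principle
    (F u : ℝ → ℝ) (hF : ContDiff ℝ 2 F) (hu : ContDiff ℝ 1 u)
    (a b : ℝ) (s₀ s₁ : ℝ → ℝ)
    (hs₀ : ContDiffOn ℝ 1 s₀ (Ioo a b)) (hs₁ : ContDiffOn ℝ 1 s₁ (Ioo a b))
    (hline : ∀ t ∈ Ioo a b, flowX F u (s₀ t) t = flowX F u (s₁ t) t)
    (hne : ∀ t ∈ Ioo a b, u (s₀ t) ≠ u (s₁ t)) :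
    ∀ t ∈ Ioo a b,
      (deriv (fun τ => parArea F u (s₀ τ) (s₁ τ) τ) t = 0 ↔
        deriv (fun τ => flowX F u (s₀ τ) τ) t =
          (F (u (s₀ t)) - F (u (s₁ t))) / (u (s₀ t) - u (s₁ t))) := by
  -- basic regularity facts
  have hud : Differentiable ℝ u := hu.differentiable one_ne_zero
  have huc : Continuous u := hud.continuous
  have hu'c : Continuous (deriv u) := (contDiff_one_iff_deriv.mp hu).2
  have hFd : Differentiable ℝ F := hF.differentiable two_ne_zero
  have hF1 : ContDiff ℝ 1 (deriv F) := by
    have := (contDiff_succ_iff_deriv (n := 1)).mp (by exact_mod_cast hF)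
    exact this.2.2
  have hF'd : Differentiable ℝ (deriv F) := hF1.differentiable one_ne_zero
  have hF''c : Continuous (deriv (deriv F)) := (contDiff_one_iff_deriv.mp hF1).2
  -- `c s` is the derivative of `s ↦ F'(u s)`
  set c : ℝ → ℝ := fun s => deriv (deriv F) (u s) * deriv u s with hc
  have hcc : Continuous c := (hF''c.comp huc).mul hu'c
  have hcd : ∀ s, HasDerivAt (fun r => deriv F (u r)) (c s) s := fun s =>
    (hF'd (u s)).hasDerivAt.comp s (hud s).hasDerivAt
  -- derivative of the flow in the `s` variable
  have hflow : ∀ t s, deriv (fun r => flowX F u r t) s = 1 + c s * t := by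
    intro t s
    have : HasDerivAt (fun r => flowX F u r t) (1 + c s * t) s := by
      exact (hasDerivAt_id s).add ((hcd s).mul_const t)
    exact this.deriv
  -- the antiderivative G with G' = u·c
  set G : ℝ → ℝ := fun s => u s * deriv F (u s) - F (u s) with hG
  have hGd : ∀ s, HasDerivAt G (u s * c s) s := by
    intro s
    have h1 : HasDerivAt (fun r => u r * deriv F (u r))
        (deriv u s * deriv F (u s) + u s * c s) s :=
      (hud s).hasDerivAt.mul (hcd s)
    have h2 : HasDerivAt (fun r => F (u r)) (deriv F (u s) * deriv u s) s :=
      (hFd (u s)).hasDerivAt.comp s (hud s).hasDerivAt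
    have := h1.sub h2
    convert this using 1
    any_goals rfl
    ring
  -- the integral identity
  set V : ℝ → ℝ := fun x => ∫ r in (0:ℝ)..x, u r with hV
  have key : ∀ σ₀ σ₁ τ, parArea F u σ₀ σ₁ τ = (V σ₁ - V σ₀) + τ * (G σ₁ - G σ₀) := by
    intro σ₀ σ₁ τ
    have h1 : parArea F u σ₀ σ₁ τ = ∫ s in σ₀..σ₁, (u s + τ * (u s * c s)) := by
      unfold parArea
      apply intervalIntegral.integral_congr
      intro s _
      simp only [hflow]; ring
    have hiu : IntervalIntegrable u volume σ₀ σ₁ := huc.intervalIntegrable _ _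
    have hiuc : IntervalIntegrable (fun s => u s * c s) volume σ₀ σ₁ :=
      (huc.mul hcc).intervalIntegrable _ _
    rw [h1, intervalIntegral.integral_add hiu (hiuc.const_mul τ)]
    have h2 : (∫ s in σ₀..σ₁, u s) = V σ₁ - V σ₀ :=
      (intervalIntegral.integral_interval_sub_left
        (huc.intervalIntegrable _ _) (huc.intervalIntegrable _ _)).symm
    have h3 : (∫ s in σ₀..σ₁, u s * c s) = G σ₁ - G σ₀ :=
      intervalIntegral.integral_eq_sub_of_hasDerivAt (fun s _ => hGd s) hiuc
    rw [intervalIntegral.integral_const_mul, h2, h3]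
  -- now go to the point t
  intro t ht
  have hInhds : Ioo a b ∈ nhds t := (isOpen_Ioo).mem_nhds ht
  have hd₀ : DifferentiableAt ℝ s₀ t :=
    ((hs₀.differentiableOn one_ne_zero) t ht).differentiableAt hInhds
  have hd₁ : DifferentiableAt ℝ s₁ t :=
    ((hs₁.differentiableOn one_ne_zero) t ht).differentiableAt hInhds
  set p₀ := deriv s₀ t with hp₀
  set p₁ := deriv s₁ t with hp₁
  have hs₀' : HasDerivAt s₀ p₀ t := hd₀.hasDerivAt
  have hs₁' : HasDerivAt s₁ p₁ t := hd₁.hasDerivAt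
  -- FTC-1 : V has derivative u
  have hVd : ∀ x : ℝ, HasDerivAt V (u x) x := fun x =>
    intervalIntegral.integral_hasDerivAt_right (huc.intervalIntegrable _ _)
      (huc.stronglyMeasurableAtFilter _ _) huc.continuousAt
  -- abbreviations at t
  set u₀ := u (s₀ t)
  set u₁ := u (s₁ t)
  set c₀ := c (s₀ t)
  set c₁ := c (s₁ t)
  -- derivative of A
  have hA : HasDerivAt (fun τ => parArea F u (s₀ τ) (s₁ τ) τ)
      ((u₁ * p₁ - u₀ * p₀) + ((G (s₁ t) - G (s₀ t)) +
        t * (u₁ * c₁ * p₁ - u₀ * c₀ * p₀))) t := by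
    have h1 : HasDerivAt (fun τ => V (s₁ τ) - V (s₀ τ)) (u₁ * p₁ - u₀ * p₀) t :=
      ((hVd (s₁ t)).comp t hs₁').sub ((hVd (s₀ t)).comp t hs₀')
    have h2 : HasDerivAt (fun τ => G (s₁ τ) - G (s₀ τ))
        (u₁ * c₁ * p₁ - u₀ * c₀ * p₀) t := by
      have := (((hGd (s₁ t)).comp t hs₁').sub ((hGd (s₀ t)).comp t hs₀'))
      convert this using 1
      any_goals rfl
    have h3 : HasDerivAt (fun τ => τ * (G (s₁ τ) - G (s₀ τ)))
        (1 * (G (s₁ t) - G (s₀ t)) + t * (u₁ * c₁ * p₁ - u₀ * c₀ * p₀)) t :=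
      (hasDerivAt_id t).mul h2
    have := h1.add h3
    have heq : (fun τ => parArea F u (s₀ τ) (s₁ τ) τ)
        = fun τ => (V (s₁ τ) - V (s₀ τ)) + τ * (G (s₁ τ) - G (s₀ τ)) := by
      funext τ; exact key _ _ _
    rw [heq]
    convert this using 1
    any_goals rfl
    ring
  -- derivative of the line position, computed from s₀ and from s₁
  have hX : HasDerivAt (fun τ => flowX F u (s₀ τ) τ)
      (p₀ * (1 + t * c₀) + deriv F u₀) t := by
    have h0 : HasDerivAt (fun τ => deriv F (u (s₀ τ))) (c₀ * p₀) t :=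
      (hcd (s₀ t)).comp t hs₀'
    have h1 : HasDerivAt (fun τ => deriv F (u (s₀ τ)) * τ)
        (c₀ * p₀ * t + deriv F u₀ * 1) t := h0.mul (hasDerivAt_id t)
    have := hs₀'.add h1
    have heq : (fun τ => flowX F u (s₀ τ) τ)
        = fun τ => s₀ τ + deriv F (u (s₀ τ)) * τ := by funext τ; rfl
    rw [heq]
    convert this using 1
    any_goals rfl
    ring
  have hY : HasDerivAt (fun τ => flowX F u (s₁ τ) τ)
      (p₁ * (1 + t * c₁) + deriv F u₁) t := by
    have h0 : HasDerivAt (fun τ => deriv F (u (s₁ τ))) (c₁ * p₁) t :=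
      (hcd (s₁ t)).comp t hs₁'
    have h1 : HasDerivAt (fun τ => deriv F (u (s₁ τ)) * τ)
        (c₁ * p₁ * t + deriv F u₁ * 1) t := h0.mul (hasDerivAt_id t)
    have := hs₁'.add h1
    have heq : (fun τ => flowX F u (s₁ τ) τ)
        = fun τ => s₁ τ + deriv F (u (s₁ τ)) * τ := by funext τ; rfl
    rw [heq]
    convert this using 1
    any_goals rfl
    ring
  -- the two computations agree since the two flows coincide on Ioo a b
  have heqF : (fun τ => flowX F u (s₀ τ) τ) =ᶠ[nhds t] (fun τ => flowX F u (s₁ τ) τ) :=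
    Filter.eventually_of_mem hInhds (fun τ hτ => hline τ hτ)
  have hXY : p₀ * (1 + t * c₀) + deriv F u₀ = p₁ * (1 + t * c₁) + deriv F u₁ :=
    hX.unique (hY.congr_of_eventuallyEq heqF)
  -- set X' and rewrite derivatives
  set X' := p₀ * (1 + t * c₀) + deriv F u₀ with hX'
  have hderivX : deriv (fun τ => flowX F u (s₀ τ) τ) t = X' := hX.deriv
  have hderivA : deriv (fun τ => parArea F u (s₀ τ) (s₁ τ) τ) t
      = (u₁ - u₀) * X' + (F u₀ - F u₁) := by
    rw [hA.deriv]
    have e0 : u₀ * p₀ * (1 + t * c₀) = u₀ * (X' - deriv F u₀) := by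
      rw [hX']; ring
    have e1 : u₁ * p₁ * (1 + t * c₁) = u₁ * (X' - deriv F u₁) := by
      rw [hXY]; ring
    have : (u₁ * p₁ - u₀ * p₀) + ((G (s₁ t) - G (s₀ t)) +
        t * (u₁ * c₁ * p₁ - u₀ * c₀ * p₀))
        = (u₁ * p₁ * (1 + t * c₁) - u₀ * p₀ * (1 + t * c₀)) + (G (s₁ t) - G (s₀ t)) := by
      ring
    rw [this, e0, e1]
    simp only [hG]
    ring
  have hne' : u₀ - u₁ ≠ 0 := sub_ne_zero.mpr (hne t ht)
  rw [hderivA, hderivX]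
  constructor
  · intro h
    have : (u₁ - u₀) * X' = F u₁ - F u₀ := by linarith
    field_simp
    linarith [this]
  · intro h
    rw [h]
    field_simp
    ring
end
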